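/- Let f : ℝⁿ → ℝ be C¹ with L-Lipschitz gradient on all of ℝⁿ, and let (x^k) be IGDm iterates with X = ℝⁿ and parameters satisfying max{Lτ, 2Lτδ̄ + (Lτ+1)β̄²} < 1 − ν. If inf_{k} f(x^k) > −∞, then ∇f(x^k) → 0 as k → ∞. -/

import Mathlib

open Set Filter
open intervalIntegral
open scoped RealInnerProductSpace

section aux
variable {E : Type*} [NormedAddCommGroup E] [InnerProductSpace ℝ E] [CompleteSpace E]

lemma grad_cont (f : E → ℝ) (L : ℝ) (hL : 0 ≤ L)
    (hlip : ∀ x y : E, ‖gradient f x - gradient f y‖ ≤ L * ‖x - y‖) :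
    Continuous (gradient f) := by
  have : LipschitzWith (Real.toNNReal L) (gradient f) := by
    apply LipschitzWith.of_dist_le_mul
    intro x y
    simpa [dist_eq_norm, Real.coe_toNNReal L hL] using hlip x y
  exact this.continuous

lemma ftc_line (f : E → ℝ) (hdiff : Differentiable ℝ f) (L : ℝ) (hL : 0 ≤ L)
    (hlip : ∀ x y : E, ‖gradient f x - gradient f y‖ ≤ L * ‖x - y‖) (p v : E) :
    f (p + v) - f p = ∫ t in (0:ℝ)..1, ⟪gradient f (p + t • v), v⟫ := by
  have hline : ∀ t : ℝ, HasDerivAt (fun s : ℝ => f (p + s • v)) ⟪gradient f (p + t • v), v⟫ t := by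
    intro t
    have h1 : HasDerivAt (fun s : ℝ => p + s • v) v t := by
      simpa using ((hasDerivAt_id t).smul_const v).const_add p
    have h2 := (hdiff (p + t • v)).hasGradientAt.hasFDerivAt
    have := h2.comp_hasDerivAt t h1
    simpa [InnerProductSpace.toDual_apply_apply, Function.comp_def] using this
  have hcont : Continuous fun t : ℝ => ⟪gradient f (p + t • v), v⟫ := by
    apply Continuous.inner
    · exact (grad_cont f L hL hlip).comp (by continuity)
    · exact continuous_const
  rw [intervalIntegral.integral_eq_sub_of_hasDerivAt (fun t _ => hline t)
    (hcont.intervalIntegrable 0 1)]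
  simp

lemma descent1 (f : E → ℝ) (hdiff : Differentiable ℝ f) (L : ℝ) (hL : 0 ≤ L)
    (hlip : ∀ x y : E, ‖gradient f x - gradient f y‖ ≤ L * ‖x - y‖) (p v : E) :
    f (p + v) ≤ f p + ⟪gradient f p, v⟫ + L / 2 * ‖v‖ ^ 2 := by
  have hftc := ftc_line f hdiff L hL hlip p v
  have hcont : Continuous fun t : ℝ => ⟪gradient f (p + t • v), v⟫ := by
    apply Continuous.inner
    · exact (grad_cont f L hL hlip).comp (by continuity)
    · exact continuous_const
  have key : (∫ t in (0:ℝ)..1, ⟪gradient f (p + t • v), v⟫)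
      ≤ ∫ t in (0:ℝ)..1, (⟪gradient f p, v⟫ + L * t * ‖v‖ ^ 2) := by
    apply intervalIntegral.integral_mono_on (by norm_num)
      (hcont.intervalIntegrable 0 1)
      (by apply Continuous.intervalIntegrable; continuity)
    intro t ht
    have h1 : ⟪gradient f (p + t • v) - gradient f p, v⟫
        ≤ ‖gradient f (p + t • v) - gradient f p‖ * ‖v‖ := real_inner_le_norm _ _
    have h2 : ‖gradient f (p + t • v) - gradient f p‖ ≤ L * ‖t • v‖ := by
      simpa using hlip (p + t • v) p
    have h3 : ‖t • v‖ = t * ‖v‖ := by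
      rw [norm_smul, Real.norm_eq_abs, abs_of_nonneg ht.1]
    have h4 : ⟪gradient f (p + t • v) - gradient f p, v⟫
        = ⟪gradient f (p + t • v), v⟫ - ⟪gradient f p, v⟫ := inner_sub_left _ _ _
    have h5 := mul_le_mul_of_nonneg_right h2 (norm_nonneg v)
    rw [h3] at h5
    have h6 : L * (t * ‖v‖) * ‖v‖ = L * t * ‖v‖ ^ 2 := by ring
    linarith [h6 ▸ h5]
  have hint : (∫ t in (0:ℝ)..1, (⟪gradient f p, v⟫ + L * t * ‖v‖ ^ 2))
      = ⟪gradient f p, v⟫ + L / 2 * ‖v‖ ^ 2 := by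
    rw [intervalIntegral.integral_add (by apply Continuous.intervalIntegrable; continuity)
      (by apply Continuous.intervalIntegrable; continuity)]
    simp only [intervalIntegral.integral_const, smul_eq_mul]
    have : (∫ t in (0:ℝ)..1, L * t * ‖v‖ ^ 2)
        = (∫ t in (0:ℝ)..1, t) * (L * ‖v‖ ^ 2) := by
      rw [← intervalIntegral.integral_mul_const]
      congr 1; ext t; ring
    rw [this, integral_id]
    ring
  linarith [hftc ▸ key.trans_eq hint]

lemma descent2 (f : E → ℝ) (hdiff : Differentiable ℝ f) (L : ℝ) (hL : 0 ≤ L)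
    (hlip : ∀ x y : E, ‖gradient f x - gradient f y‖ ≤ L * ‖x - y‖) (p v : E) :
    f (p + v) ≤ f p + ⟪gradient f (p + v), v⟫ + L / 2 * ‖v‖ ^ 2 := by
  have hftc := ftc_line f hdiff L hL hlip p v
  have hcont : Continuous fun t : ℝ => ⟪gradient f (p + t • v), v⟫ := by
    apply Continuous.inner
    · exact (grad_cont f L hL hlip).comp (by continuity)
    · exact continuous_const
  have key : (∫ t in (0:ℝ)..1, ⟪gradient f (p + t • v), v⟫)
      ≤ ∫ t in (0:ℝ)..1, (⟪gradient f (p + v), v⟫ + L * (1 - t) * ‖v‖ ^ 2) := by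
    apply intervalIntegral.integral_mono_on (by norm_num)
      (hcont.intervalIntegrable 0 1)
      (by apply Continuous.intervalIntegrable; continuity)
    intro t ht
    have h1 : ⟪gradient f (p + t • v) - gradient f (p + v), v⟫
        ≤ ‖gradient f (p + t • v) - gradient f (p + v)‖ * ‖v‖ := real_inner_le_norm _ _
    have h2 : ‖gradient f (p + t • v) - gradient f (p + v)‖
        ≤ L * ‖(t - 1) • v‖ := by
      have := hlip (p + t • v) (p + v)
      have he : p + t • v - (p + v) = (t - 1) • v := by
        rw [sub_smul, one_smul]; abel
      rwa [he] at this
    have h3 : ‖(t - 1) • v‖ = (1 - t) * ‖v‖ := by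
      rw [norm_smul, Real.norm_eq_abs, abs_of_nonpos (by linarith [ht.2]), neg_sub]
    have h4 : ⟪gradient f (p + t • v) - gradient f (p + v), v⟫
        = ⟪gradient f (p + t • v), v⟫ - ⟪gradient f (p + v), v⟫ := inner_sub_left _ _ _
    have h5 := mul_le_mul_of_nonneg_right h2 (norm_nonneg v)
    rw [h3] at h5
    have h6 : L * ((1 - t) * ‖v‖) * ‖v‖ = L * (1 - t) * ‖v‖ ^ 2 := by ring
    linarith [h6 ▸ h5]
  have hint : (∫ t in (0:ℝ)..1, (⟪gradient f (p + v), v⟫ + L * (1 - t) * ‖v‖ ^ 2))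
      = ⟪gradient f (p + v), v⟫ + L / 2 * ‖v‖ ^ 2 := by
    rw [intervalIntegral.integral_add (by apply Continuous.intervalIntegrable; continuity)
      (by apply Continuous.intervalIntegrable; continuity)]
    simp only [intervalIntegral.integral_const, smul_eq_mul]
    have : (∫ t in (0:ℝ)..1, L * (1 - t) * ‖v‖ ^ 2)
        = (∫ t in (0:ℝ)..1, (1 - t)) * (L * ‖v‖ ^ 2) := by
      rw [← intervalIntegral.integral_mul_const]
      congr 1; ext t; ring
    have hid : (∫ t in (0:ℝ)..1, (1 - t)) = 1/2 := by
      rw [intervalIntegral.integral_sub (by apply Continuous.intervalIntegrable; continuity)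
        (by apply Continuous.intervalIntegrable; continuity)]
      simp [integral_id]
      norm_num
    rw [this, hid]
    ring
  linarith [hftc ▸ key.trans_eq hint]


theorem IGDm_key {n : ℕ}
    (f : EuclideanSpace ℝ (Fin n) → ℝ)
    (hdiff : Differentiable ℝ f)
    (L : ℝ) (hL : 0 < L)
    (hlip : ∀ x y : EuclideanSpace ℝ (Fin n),
      ‖gradient f x - gradient f y‖ ≤ L * ‖x - y‖)
    (descent1 : ∀ p v : EuclideanSpace ℝ (Fin n),
      f (p + v) ≤ f p + ⟪gradient f p, v⟫ + L / 2 * ‖v‖ ^ 2)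
    (descent2 : ∀ p v : EuclideanSpace ℝ (Fin n),
      f (p + v) ≤ f p + ⟪gradient f (p + v), v⟫ + L / 2 * ‖v‖ ^ 2)
    (τ ν βbar δbar : ℝ) (hτ : 0 < τ) (hν : ν ∈ Set.Ioo (0:ℝ) 1)
    (β γ : ℕ → ℝ) (hβnn : ∀ k, 0 ≤ β k) (hγnn : ∀ k, 0 ≤ γ k)
    (hβbar : ∀ k, β k ≤ βbar) (hβbar1 : βbar < 1)
    (hδbar : ∀ k, |β k - γ k| ≤ δbar)
    (x xin xex g : ℕ → EuclideanSpace ℝ (Fin n))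
    (hxin : ∀ k, 1 ≤ k → xin k = x k + β k • (x k - x (k-1)))
    (hxex : ∀ k, 1 ≤ k → xex k = x k + γ k • (x k - x (k-1)))
    (hupd : ∀ k, 1 ≤ k → x (k+1) = xin k - τ • g k)
    (hg : ∀ k, 1 ≤ k → ‖g k - gradient f (xex k)‖ ≤ ν * ‖g k‖)
    (k : ℕ) (hk : 1 ≤ k) :
    2*τ*(f (x (k+1))) + (1 - ν - L*τ*δbar) * ‖x (k+1) - x k‖^2
      + (τ^2*(1 - ν - L*τ)) * ‖g k‖^2
      + (1 - ν - 2*L*τ*δbar - (L*τ+1)*βbar^2) * ‖x k - x (k-1)‖^2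
    ≤ 2*τ*(f (x k)) + (1 - ν - L*τ*δbar) * ‖x k - x (k-1)‖^2 := by
  obtain ⟨hν0, hν1⟩ := hν
  set d : EuclideanSpace ℝ (Fin n) := x k - x (k-1) with hd
  set gk : EuclideanSpace ℝ (Fin n) := g k with hgk
  set βk : ℝ := β k with hβk
  set I : EuclideanSpace ℝ (Fin n) := gradient f (xin k) with hI
  set G : EuclideanSpace ℝ (Fin n) := gradient f (xex k) with hG
  set a : ℝ := ‖gk‖ with ha
  set b : ℝ := ‖d‖ with hb
  set c : ℝ := ‖x (k+1) - x k‖ with hc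
  clear_value a b c
  have ha0 : 0 ≤ a := ha ▸ norm_nonneg _
  have hb0 : 0 ≤ b := hb ▸ norm_nonneg _
  have hc0 : 0 ≤ c := hc ▸ norm_nonneg _
  have e1 : x k + βk • d = xin k := (hxin k hk).symm
  have e2 : x (k+1) = xin k + (-(τ • gk)) := by rw [hupd k hk]; abel
  have e3 : x (k+1) - x k = βk • d - τ • gk := by
    rw [e2, ← e1]; abel
  have hcd : c = ‖βk • d - τ • gk‖ := by rw [hc, e3]
  have hnsm1 : ‖-(τ • gk)‖^2 = τ^2 * a^2 := by
    rw [ha, norm_neg, norm_smul, Real.norm_eq_abs, abs_of_pos hτ, mul_pow]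
  have hnsm2 : ‖βk • d‖^2 = βk^2 * b^2 := by
    rw [hb, norm_smul, Real.norm_eq_abs, hβk, abs_of_nonneg (hβnn k), mul_pow]
  -- descent lemma applications
  have F2 : f (x (k+1)) ≤ f (xin k) + ⟪I, -(τ • gk)⟫ + L/2 * (τ^2 * a^2) := by
    have h := descent1 (xin k) (-(τ • gk))
    rw [← e2, hnsm1] at h
    exact h
  have F3 : f (xin k) ≤ f (x k) + ⟪I, βk • d⟫ + L/2 * (βk^2 * b^2) := by
    have h := descent2 (x k) (βk • d)
    rw [e1, hnsm2] at h
    exact h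
  -- combine the inner products
  have F4 : ⟪I, βk • d⟫ + ⟪I, -(τ • gk)⟫ = ⟪I, βk • d - τ • gk⟫ := by
    rw [← inner_add_right, ← sub_eq_add_neg]
  -- error bounds
  have hIG : ‖I - G‖ ≤ L * δbar * b := by
    have h1 := hlip (xin k) (xex k)
    have h2 : xin k - xex k = (βk - γ k) • d := by
      rw [hxin k hk, hxex k hk, ← hd, ← hβk, sub_smul]; abel
    rw [h2, norm_smul, Real.norm_eq_abs, ← hb] at h1
    calc ‖I - G‖ ≤ L * (|βk - γ k| * b) := h1
      _ ≤ L * (δbar * b) := by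
          apply mul_le_mul_of_nonneg_left _ hL.le
          exact mul_le_mul_of_nonneg_right (hβk ▸ hδbar k) hb0
      _ = L * δbar * b := by ring
  have hGg : ‖G - gk‖ ≤ ν * a := by
    rw [norm_sub_rev, ha]; exact hg k hk
  -- decompose ⟪I, d'⟫
  have F5 : ⟪I, βk • d - τ • gk⟫ ≤ ⟪gk, βk • d - τ • gk⟫ + L * δbar * b * c + ν * a * c := by
    have hsplit : ⟪I, βk • d - τ • gk⟫ = ⟪gk, βk • d - τ • gk⟫
        + ⟪I - G, βk • d - τ • gk⟫ + ⟪G - gk, βk • d - τ • gk⟫ := by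
      rw [← inner_add_left, ← inner_add_left]; congr 1; abel
    have hcs1 : ⟪I - G, βk • d - τ • gk⟫ ≤ L * δbar * b * c := by
      calc ⟪I - G, βk • d - τ • gk⟫ ≤ ‖I - G‖ * ‖βk • d - τ • gk‖ := real_inner_le_norm _ _
        _ = ‖I - G‖ * c := by rw [hcd]
        _ ≤ (L * δbar * b) * c := mul_le_mul_of_nonneg_right hIG hc0
    have hcs2 : ⟪G - gk, βk • d - τ • gk⟫ ≤ ν * a * c := by
      calc ⟪G - gk, βk • d - τ • gk⟫ ≤ ‖G - gk‖ * ‖βk • d - τ • gk‖ := real_inner_le_norm _ _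
        _ = ‖G - gk‖ * c := by rw [hcd]
        _ ≤ (ν * a) * c := mul_le_mul_of_nonneg_right hGg hc0
    linarith
  -- polarization identity
  have F6 : 2*τ*⟪gk, βk • d - τ • gk⟫ = βk^2 * b^2 - τ^2 * a^2 - c^2 := by
    have hpol : c^2 = ‖βk • d‖^2 - 2 * ⟪βk • d, τ • gk⟫ + ‖τ • gk‖^2 := by
      rw [hcd]; exact norm_sub_sq_real _ _
    have h2 : ‖τ • gk‖^2 = τ^2 * a^2 := by
      rw [ha, norm_smul, Real.norm_eq_abs, abs_of_pos hτ, mul_pow]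
    have h3 : ⟪βk • d, τ • gk⟫ = βk * τ * ⟪d, gk⟫ := by
      rw [real_inner_smul_left, real_inner_smul_right]; ring
    have h4 : ⟪gk, βk • d - τ • gk⟫ = βk * ⟪gk, d⟫ - τ * a^2 := by
      rw [inner_sub_right, real_inner_smul_right, real_inner_smul_right,
        real_inner_self_eq_norm_sq, ha]
    have h5 : ⟪gk, d⟫ = ⟪d, gk⟫ := real_inner_comm _ _
    rw [hnsm2, h2, h3] at hpol
    rw [h4, h5]
    linarith
  -- AM-GM bounds
  have amgm1 : 2*τ*(ν * a * c) ≤ ν * (τ^2 * a^2) + ν * c^2 := by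
    have h := mul_nonneg hν0.le (sq_nonneg (τ * a - c))
    linarith [h]
  have amgm2 : 2*τ*(L * δbar * b * c) ≤ L*τ*δbar * b^2 + L*τ*δbar * c^2 := by
    have hδ0 : 0 ≤ δbar := le_trans (abs_nonneg _) (hδbar 0)
    have h := mul_nonneg (mul_nonneg (mul_nonneg hL.le hτ.le) hδ0) (sq_nonneg (b - c))
    linarith [h]
  -- β k ≤ βbar
  have hββ : βk^2 * b^2 ≤ βbar^2 * b^2 := by
    have h1 : βk^2 ≤ βbar^2 := by
      rw [hβk]
      exact pow_le_pow_left₀ (hβnn k) (hβbar k) 2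
    exact mul_le_mul_of_nonneg_right h1 (sq_nonneg _)
  have hββ' : (L*τ) * (βk^2 * b^2) ≤ (L*τ) * (βbar^2 * b^2) :=
    mul_le_mul_of_nonneg_left hββ (mul_nonneg hL.le hτ.le)
  -- assemble
  have h2τ : (0:ℝ) ≤ 2*τ := by linarith
  have h0 : f (x (k+1)) ≤ f (x k) + ⟪I, βk • d - τ • gk⟫ + L/2 * (βk^2*b^2 + τ^2*a^2) := by
    linarith [F2, F3, F4]
  have h0' := mul_le_mul_of_nonneg_left h0 h2τ
  have F5' := mul_le_mul_of_nonneg_left F5 h2τ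
  set J : ℝ := ⟪I, βk • d - τ • gk⟫ with hJ
  set K : ℝ := ⟪gk, βk • d - τ • gk⟫ with hK
  clear_value J K
  have main : 2*τ*(f (x (k+1))) ≤ 2*τ*(f (x k)) + 2*τ*K
      + 2*τ*(L * δbar * b * c) + 2*τ*(ν * a * c) + L*τ*(βk^2 * b^2) + L*τ*(τ^2 * a^2) := by
    linarith [h0', F5']
  linarith [main, F6, amgm1, amgm2, hββ, hββ']

end aux


/-- Global IGDm: for `f : ℝⁿ → ℝ` of class `C¹` with globally `L`-Lipschitz gradient,
under the stated parameter conditions and lower boundedness of `(f (xᵏ))`, the gradients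
`∇f(xᵏ)` converge to `0`. -/
theorem IGDm_global_gradient_to_zero {n : ℕ}
    (f : EuclideanSpace ℝ (Fin n) → ℝ)
    (hdiff : Differentiable ℝ f)
    (L : ℝ) (hL : 0 < L)
    (hlip : ∀ x y : EuclideanSpace ℝ (Fin n),
      ‖gradient f x - gradient f y‖ ≤ L * ‖x - y‖)
    (τ ν βbar δbar : ℝ) (hτ : 0 < τ) (hν : ν ∈ Set.Ioo (0:ℝ) 1)
    (β γ : ℕ → ℝ) (hβnn : ∀ k, 0 ≤ β k) (hγnn : ∀ k, 0 ≤ γ k)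
    (hβbar : ∀ k, β k ≤ βbar) (hβbar1 : βbar < 1)
    (hδbar : ∀ k, |β k - γ k| ≤ δbar)
    (x xin xex g : ℕ → EuclideanSpace ℝ (Fin n))
    (hx01 : x 0 = x 1)
    (hxin : ∀ k, 1 ≤ k → xin k = x k + β k • (x k - x (k-1)))
    (hxex : ∀ k, 1 ≤ k → xex k = x k + γ k • (x k - x (k-1)))
    (hupd : ∀ k, 1 ≤ k → x (k+1) = xin k - τ • g k)
    (hg : ∀ k, 1 ≤ k → ‖g k - gradient f (xex k)‖ ≤ ν * ‖g k‖)
    (hparam : max (L*τ) (2*L*τ*δbar + (L*τ+1)*βbar^2) < 1 - ν)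
    (hbdd : ∃ m : ℝ, ∀ k, m ≤ f (x k)) :
    Tendsto (fun k => gradient f (x k)) atTop (nhds 0) := by
  obtain ⟨m, hm⟩ := hbdd
  have hν0 : (0:ℝ) < ν := hν.1
  have hν1 : ν < 1 := hν.2
  have hmax1 : L*τ < 1 - ν := lt_of_le_of_lt (le_max_left _ _) hparam
  have hmax2 : 2*L*τ*δbar + (L*τ+1)*βbar^2 < 1 - ν := lt_of_le_of_lt (le_max_right _ _) hparam
  have hδ0 : 0 ≤ δbar := le_trans (abs_nonneg _) (hδbar 0)
  have hβbar0 : 0 ≤ βbar := le_trans (hβnn 0) (hβbar 0)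
  set S : ℝ := 1 - ν - L*τ*δbar with hSdef
  set ρ : ℝ := τ^2*(1 - ν - L*τ) with hρdef
  set η : ℝ := 1 - ν - 2*L*τ*δbar - (L*τ+1)*βbar^2 with hηdef
  have hLτδ : 0 ≤ L*τ*δbar := by positivity
  have hβsq : 0 ≤ (L*τ+1)*βbar^2 := by positivity
  have hρ : 0 < ρ := by
    have : 0 < 1 - ν - L*τ := by linarith
    positivity
  have hη : 0 < η := by rw [hηdef]; linarith
  have hS : 0 ≤ S := by rw [hSdef]; linarith
  -- per-step decrease
  have hdec : ∀ k, 1 ≤ k →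
      2*τ*(f (x (k+1))) + S * ‖x (k+1) - x k‖^2
        + (ρ * ‖g k‖^2 + η * ‖x k - x (k-1)‖^2)
      ≤ 2*τ*(f (x k)) + S * ‖x k - x (k-1)‖^2 := by
    intro k hk
    have h := IGDm_key f hdiff L hL hlip
      (fun p v => descent1 f hdiff L hL.le hlip p v)
      (fun p v => descent2 f hdiff L hL.le hlip p v)
      τ ν βbar δbar hτ hν β γ hβnn hγnn hβbar hβbar1 hδbar
      x xin xex g hxin hxex hupd hg k hk
    rw [hSdef, hρdef, hηdef]
    linarith
  -- telescoping
  set H : ℕ → ℝ := fun k => 2*τ*(f (x k)) + S * ‖x k - x (k-1)‖^2 with hHdef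
  set t : ℕ → ℝ := fun i => ρ * ‖g (i+1)‖^2 + η * ‖x (i+1) - x i‖^2 with htdef
  have ht0 : ∀ i, 0 ≤ t i := fun i => by rw [htdef]; positivity
  have hHlow : ∀ k, 2*τ*m ≤ H k := by
    intro k
    have h1 : m ≤ f (x k) := hm k
    have h2 : 0 ≤ S * ‖x k - x (k-1)‖^2 := by positivity
    rw [hHdef]
    simp only
    nlinarith [hτ]
  have htel : ∀ N : ℕ, (∑ i ∈ Finset.range N, t i) + H (N+1) ≤ H 1 := by
    intro N
    induction N with
    | zero => simp
    | succ N ih =>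
        rw [Finset.sum_range_succ]
        have h := hdec (N+1) (Nat.le_add_left 1 N)
        have he : ((N:ℕ)+1) - 1 = N := by omega
        rw [he] at h
        have ht' : t N = ρ * ‖g (N+1)‖^2 + η * ‖x (N+1) - x N‖^2 := rfl
        have hH1 : H (N+1+1) = 2*τ*(f (x (N+1+1))) + S * ‖x (N+1+1) - x (N+1)‖^2 := rfl
        have hH2 : H (N+1) = 2*τ*(f (x (N+1))) + S * ‖x (N+1) - x N‖^2 := rfl
        linarith
  have hbound : ∀ N : ℕ, (∑ i ∈ Finset.range N, t i) ≤ H 1 - 2*τ*m := by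
    intro N
    have := htel N
    have := hHlow (N+1)
    linarith
  have hsummable : Summable t := summable_of_sum_range_le ht0 hbound
  have httend : Tendsto t atTop (nhds 0) := hsummable.tendsto_atTop_zero
  -- extract limits
  have hag : Tendsto (fun i => ρ * ‖g (i+1)‖^2) atTop (nhds 0) := by
    apply squeeze_zero (fun i => by positivity) (fun i => ?_) httend
    rw [htdef]
    have : 0 ≤ η * ‖x (i+1) - x i‖^2 := by positivity
    simp only
    linarith
  have hbg : Tendsto (fun i => η * ‖x (i+1) - x i‖^2) atTop (nhds 0) := by
    apply squeeze_zero (fun i => by positivity) (fun i => ?_) httend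
    rw [htdef]
    have : 0 ≤ ρ * ‖g (i+1)‖^2 := by positivity
    simp only
    linarith
  have hag2 : Tendsto (fun i => ‖g (i+1)‖^2) atTop (nhds 0) := by
    have h := hag.const_mul ρ⁻¹
    simp only [mul_zero] at h
    have he : ∀ i, ρ⁻¹ * (ρ * ‖g (i+1)‖^2) = ‖g (i+1)‖^2 := by
      intro i
      field_simp
    simpa only [he] using h
  have hbg2 : Tendsto (fun i => ‖x (i+1) - x i‖^2) atTop (nhds 0) := by
    have h := hbg.const_mul η⁻¹
    simp only [mul_zero] at h
    have he : ∀ i, η⁻¹ * (η * ‖x (i+1) - x i‖^2) = ‖x (i+1) - x i‖^2 := by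
      intro i
      field_simp
    simpa only [he] using h
  have hga : Tendsto (fun i => ‖g (i+1)‖) atTop (nhds 0) := by
    have h := (Real.continuous_sqrt.tendsto 0).comp hag2
    simp only [Function.comp_def, Real.sqrt_zero] at h
    have he : ∀ i, Real.sqrt (‖g (i+1)‖^2) = ‖g (i+1)‖ := fun i =>
      Real.sqrt_sq (norm_nonneg _)
    simpa only [he] using h
  have hba : Tendsto (fun i => ‖x (i+1) - x i‖) atTop (nhds 0) := by
    have h := (Real.continuous_sqrt.tendsto 0).comp hbg2
    simp only [Function.comp_def, Real.sqrt_zero] at h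
    have he : ∀ i, Real.sqrt (‖x (i+1) - x i‖^2) = ‖x (i+1) - x i‖ := fun i =>
      Real.sqrt_sq (norm_nonneg _)
    simpa only [he] using h
  -- unshift
  have hga' : Tendsto (fun k => ‖g k‖) atTop (nhds 0) := by
    rw [← tendsto_add_atTop_iff_nat 1]
    exact hga
  have hba' : Tendsto (fun k => ‖x k - x (k-1)‖) atTop (nhds 0) := by
    rw [← tendsto_add_atTop_iff_nat 1]
    have he : ∀ i : ℕ, ‖x (i+1) - x ((i+1)-1)‖ = ‖x (i+1) - x i‖ := by
      intro i; congr 2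
    simpa only [he] using hba
  -- final squeeze
  rw [tendsto_zero_iff_norm_tendsto_zero]
  have hlim : Tendsto (fun k => (L*(βbar+δbar)) * ‖x k - x (k-1)‖ + (1+ν) * ‖g k‖)
      atTop (nhds 0) := by
    have h1 := hba'.const_mul (L*(βbar+δbar))
    have h2 := hga'.const_mul (1+ν)
    simpa using h1.add h2
  apply squeeze_zero' (Filter.Eventually.of_forall (fun k => norm_nonneg _)) _ hlim
  rw [Filter.eventually_atTop]
  refine ⟨1, fun k hk => ?_⟩
  have hG : ‖gradient f (x k) - gradient f (xex k)‖ ≤ L*(βbar+δbar) * ‖x k - x (k-1)‖ := by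
    have h1 := hlip (x k) (xex k)
    have h2 : x k - xex k = -(γ k • (x k - x (k-1))) := by
      rw [hxex k hk]; abel
    rw [h2, norm_neg, norm_smul, Real.norm_eq_abs, abs_of_nonneg (hγnn k)] at h1
    have h3 : γ k ≤ βbar + δbar := by
      have h4 := (abs_le.mp (hδbar k)).1
      have h5 := hβbar k
      linarith
    calc ‖gradient f (x k) - gradient f (xex k)‖ ≤ L * (γ k * ‖x k - x (k-1)‖) := h1
      _ ≤ L * ((βbar + δbar) * ‖x k - x (k-1)‖) := by
          apply mul_le_mul_of_nonneg_left _ hL.le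
          exact mul_le_mul_of_nonneg_right h3 (norm_nonneg _)
      _ = L*(βbar+δbar) * ‖x k - x (k-1)‖ := by ring
  have hGg : ‖gradient f (xex k) - g k‖ ≤ ν * ‖g k‖ := by
    rw [norm_sub_rev]; exact hg k hk
  have hdecomp : gradient f (x k) = (gradient f (x k) - gradient f (xex k))
      + ((gradient f (xex k) - g k) + g k) := by abel
  have step1 : ‖gradient f (x k)‖
      ≤ ‖gradient f (x k) - gradient f (xex k)‖ + (‖gradient f (xex k) - g k‖ + ‖g k‖) := by
    calc ‖gradient f (x k)‖
        = ‖(gradient f (x k) - gradient f (xex k)) + ((gradient f (xex k) - g k) + g k)‖ := by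
          rw [← hdecomp]
      _ ≤ ‖gradient f (x k) - gradient f (xex k)‖ + ‖(gradient f (xex k) - g k) + g k‖ :=
          norm_add_le _ _
      _ ≤ ‖gradient f (x k) - gradient f (xex k)‖ + (‖gradient f (xex k) - g k‖ + ‖g k‖) := by
          linarith [norm_add_le (gradient f (xex k) - g k) (g k)]
  calc ‖gradient f (x k)‖
      ≤ ‖gradient f (x k) - gradient f (xex k)‖ + (‖gradient f (xex k) - g k‖ + ‖g k‖) := step1
    _ ≤ L*(βbar+δbar) * ‖x k - x (k-1)‖ + (1+ν) * ‖g k‖ := by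
        have := hGg
        nlinarith [hG, norm_nonneg (g k)]
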